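/- The language L over {a,b,c,d} consisting of all words w such that the number of a's in w equals the number of b's, the number of c's equals the number of d's, and in every prefix of w the number of a's is at least the number of b's and the number of c's is at least the number of d's, is not context-free. -/

import Mathlib

/-- The four-letter alphabet `{a, b, c, d}`. -/
inductive Bag : Type
  | a | b | c | d
deriving DecidableEq

/-- The trace language of the bag over a two-element value domain: words in
which the number of `a`'s equals the number of `b`'s, the number of `c`'s
equals the number of `d`'s, and in every prefix the number of `a`'s is at
least the number of `b`'s and the number of `c`'s is at least the number of
`d`'s. -/
def bagLanguage : Language Bag :=
  { w | w.count Bag.a = w.count Bag.b ∧ w.count Bag.c = w.count Bag.d ∧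
        ∀ p, p <+: w → p.count Bag.b ≤ p.count Bag.a ∧ p.count Bag.d ≤ p.count Bag.c }

namespace BagCF

-- Parse trees for a CFG.
--
mutual
inductive PTree (T N : Type) : Type
  | node (A : N) (f : PForest T N) : PTree T N
inductive PForest (T N : Type) : Type
  | nil : PForest T N
  | consT (a : T) (f : PForest T N) : PForest T N
  | consN (p : PTree T N) (f : PForest T N) : PForest T N
end

variable {T N : Type}

def PTree.root : PTree T N → N
  | .node A _ => A

mutual
def PTree.yield : PTree T N → List T
  | .node _ f => f.yield
def PForest.yield : PForest T N → List T
  | .nil => []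
  | .consT a f => a :: f.yield
  | .consN p f => p.yield ++ f.yield
end

def PForest.syms : PForest T N → List (Symbol T N)
  | .nil => []
  | .consT a f => Symbol.terminal a :: f.syms
  | .consN p f => Symbol.nonterminal p.root :: f.syms

mutual
def PTree.height : PTree T N → ℕ
  | .node _ f => f.height + 1
def PForest.height : PForest T N → ℕ
  | .nil => 0
  | .consT _ f => f.height
  | .consN p f => max p.height f.height
end

mutual
def PTree.size : PTree T N → ℕ
  | .node _ f => f.size + 1
def PForest.size : PForest T N → ℕ
  | .nil => 0
  | .consT _ f => f.size
  | .consN p f => p.size + f.size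
end

variable {g : ContextFreeGrammar.{0} T}

mutual
def PTree.valid (g : ContextFreeGrammar.{0} T) : PTree T g.NT → Prop
  | .node A f => (∃ r ∈ g.rules, r.input = A ∧ r.output = f.syms) ∧ f.valid g
def PForest.valid (g : ContextFreeGrammar.{0} T) : PForest T g.NT → Prop
  | .nil => True
  | .consT _ f => f.valid g
  | .consN p f => p.valid g ∧ f.valid g
end


open ContextFreeGrammar in
mutual
theorem PTree.derives (t : PTree T g.NT) (ht : t.valid g) :
    g.Derives [Symbol.nonterminal t.root] (t.yield.map Symbol.terminal) := by
  match t with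
  | .node A f =>
    obtain ⟨⟨r, hr, hin, hout⟩, hf⟩ := ht
    have h1 : g.Produces [Symbol.nonterminal A] f.syms := by
      refine ⟨r, hr, ?_⟩
      have := r.rewrites_of_exists_parts [] []
      simpa [hin, hout] using this
    exact h1.trans_derives (f.derives hf)
theorem PForest.derives (f : PForest T g.NT) (hf : f.valid g) :
    g.Derives f.syms (f.yield.map Symbol.terminal) := by
  match f with
  | .nil => exact Derives.refl _
  | .consT a f' =>
    have := (f'.derives hf).append_left [Symbol.terminal a]
    simpa [PForest.syms, PForest.yield] using this
  | .consN p f' =>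
    obtain ⟨hp, hf'⟩ := hf
    have h1 := (p.derives hp).append_right f'.syms
    have h2 := (f'.derives hf').append_left (p.yield.map Symbol.terminal)
    have := h1.trans h2
    simpa [PForest.syms, PForest.yield] using this
end

/-- All-terminal forest for a word. -/
def PForest.ofWord : List T → PForest T g.NT
  | [] => .nil
  | a :: w => .consT a (ofWord w)

@[simp] theorem PForest.ofWord_syms (w : List T) :
    (PForest.ofWord (g := g) w).syms = w.map Symbol.terminal := by
  induction w with
  | nil => rfl
  | cons a w ih => simp [ofWord, syms, ih]

@[simp] theorem PForest.ofWord_yield (w : List T) :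
    (PForest.ofWord (g := g) w).yield = w := by
  induction w with
  | nil => rfl
  | cons a w ih => simp [ofWord, yield, ih]

@[simp] theorem PForest.ofWord_valid (w : List T) :
    (PForest.ofWord (g := g) w).valid g := by
  induction w with
  | nil => trivial
  | cons a w ih => exact ih

/-- Append two forests. -/
def PForest.app : PForest T N → PForest T N → PForest T N
  | .nil, f₂ => f₂
  | .consT a f, f₂ => .consT a (f.app f₂)
  | .consN p f, f₂ => .consN p (f.app f₂)

@[simp] theorem PForest.app_syms (f₁ f₂ : PForest T N) :
    (f₁.app f₂).syms = f₁.syms ++ f₂.syms := by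
  match f₁ with
  | .nil => rfl
  | .consT a f => simp [app, syms, app_syms f f₂]
  | .consN p f => simp [app, syms, app_syms f f₂]

@[simp] theorem PForest.app_yield (f₁ f₂ : PForest T N) :
    (f₁.app f₂).yield = f₁.yield ++ f₂.yield := by
  match f₁ with
  | .nil => rfl
  | .consT a f => simp [app, yield, app_yield f f₂]
  | .consN p f => simp [app, yield, app_yield f f₂]

theorem PForest.app_valid (f₁ : PForest T g.NT) {f₂ : PForest T g.NT}
    (h₁ : f₁.valid g) (h₂ : f₂.valid g) : (f₁.app f₂).valid g := by
  match f₁ with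
  | .nil => exact h₂
  | .consT a f => exact app_valid f h₁ h₂
  | .consN p f => exact ⟨h₁.1, app_valid f h₁.2 h₂⟩

/-- Split a forest according to a split of its symbol string. -/
theorem PForest.split {X Y : List (Symbol T N)} :
    ∀ {f : PForest T N}, f.syms = X ++ Y →
      ∃ f₁ f₂ : PForest T N, f = f₁.app f₂ ∧ f₁.syms = X ∧ f₂.syms = Y := by
  induction X with
  | nil => exact fun {f} h => ⟨.nil, f, rfl, rfl, h⟩
  | cons x X ih =>
    intro f h
    match f, h with
    | .consT a f', h =>
      simp only [syms, List.cons_append, List.cons.injEq] at h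
      obtain ⟨f₁, f₂, rfl, h1, h2⟩ := ih h.2
      exact ⟨.consT a f₁, f₂, rfl, by simp [syms, h.1, h1], h2⟩
    | .consN p f', h =>
      simp only [syms, List.cons_append, List.cons.injEq] at h
      obtain ⟨f₁, f₂, rfl, h1, h2⟩ := ih h.2
      exact ⟨.consN p f₁, f₂, rfl, by simp [syms, h.1, h1], h2⟩



theorem PForest.app_valid_iff (f₁ : PForest T g.NT) (f₂ : PForest T g.NT) :
    (f₁.app f₂).valid g ↔ f₁.valid g ∧ f₂.valid g := by
  match f₁ with
  | .nil => simp [app, valid]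
  | .consT a f => simpa [app, valid] using app_valid_iff f f₂
  | .consN p f =>
    simp only [app, valid, app_valid_iff f f₂]
    tauto

open ContextFreeGrammar in
theorem forest_of_derives {α : List (Symbol T g.NT)} {w : List T}
    (h : g.Derives α (w.map Symbol.terminal)) :
    ∃ f : PForest T g.NT, f.valid g ∧ f.syms = α ∧ f.yield = w := by
  induction h using Relation.ReflTransGen.head_induction_on with
  | refl => exact ⟨.ofWord w, PForest.ofWord_valid w, PForest.ofWord_syms w,
      PForest.ofWord_yield w⟩
  | head hp _ ih =>
    obtain ⟨f, hfv, hfs, hfy⟩ := ih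
    obtain ⟨r, hr, hrw⟩ := hp
    obtain ⟨p, q, hin, hout⟩ := hrw.exists_parts
    subst hout
    obtain ⟨f₁, f₂₃, rfl, hs1, hs23⟩ := PForest.split (X := p) (by simpa using hfs)
    obtain ⟨f₂, f₃, rfl, hs2, hs3⟩ := PForest.split (X := r.output) hs23
    rw [PForest.app_valid_iff, PForest.app_valid_iff] at hfv
    obtain ⟨hv1, hv2, hv3⟩ := hfv
    refine ⟨f₁.app (.consN (.node r.input f₂) f₃), ?_, ?_, ?_⟩
    · exact PForest.app_valid _ hv1 ⟨⟨⟨r, hr, rfl, hs2.symm⟩, hv2⟩, hv3⟩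
    · simp [PForest.syms, PTree.root, hs1, hs3, hin]
    · simpa [PForest.yield, PTree.yield] using hfy

open ContextFreeGrammar in
theorem tree_of_mem_language {w : List T} (hw : w ∈ g.language) :
    ∃ t : PTree T g.NT, t.valid g ∧ t.root = g.initial ∧ t.yield = w := by
  rw [mem_language_iff] at hw
  obtain ⟨f, hfv, hfs, hfy⟩ := forest_of_derives hw
  match f, hfs with
  | .consN t f', hfs =>
    simp only [PForest.syms, List.cons.injEq, Symbol.nonterminal.injEq] at hfs
    have hf' : f' = .nil := by
      match f', hfs.2 with
      | .nil, _ => rfl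
    subst hf'
    exact ⟨t, hfv.1, hfs.1, by simpa [PForest.yield] using hfy⟩

open ContextFreeGrammar in
theorem mem_language_of_tree {t : PTree T g.NT} (hv : t.valid g) (hr : t.root = g.initial) :
    t.yield ∈ g.language := by
  rw [mem_language_iff]
  have := t.derives hv
  rwa [hr] at this


mutual
inductive SubT : PTree T N → PTree T N → List T → List T → Prop
  | refl (t : PTree T N) : SubT t t [] []
  | node {f : PForest T N} {s v y} (A : N) : SubF f s v y → SubT (.node A f) s v y
inductive SubF : PForest T N → PTree T N → List T → List T → Prop
  | headN {p : PTree T N} {f s v y} : SubT p s v y → SubF (.consN p f) s v (y ++ f.yield)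
  | consT {a : T} {f : PForest T N} {s v y} : SubF f s v y → SubF (.consT a f) s (a :: v) y
  | consN {p : PTree T N} {f s v y} : SubF f s v y → SubF (.consN p f) s (p.yield ++ v) y
end

mutual
theorem SubT.yield_eq {t s : PTree T N} {v y : List T} (h : SubT t s v y) :
    t.yield = v ++ s.yield ++ y := by
  match h with
  | .refl t => simp
  | .node A hf => simpa [PTree.yield] using hf.yield_eq
theorem SubF.yield_eq {f : PForest T N} {s : PTree T N} {v y : List T} (h : SubF f s v y) :
    f.yield = v ++ s.yield ++ y := by
  match h with
  | .headN ht => simp [PForest.yield, ht.yield_eq]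
  | .consT hf => simp [PForest.yield, hf.yield_eq]
  | .consN hf => simp [PForest.yield, hf.yield_eq]
end

mutual
theorem SubT.valid {t s : PTree T g.NT} {v y : List T} (h : SubT t s v y)
    (hv : t.valid g) : s.valid g := by
  match h with
  | .refl t => exact hv
  | .node A hf => exact hf.valid hv.2
theorem SubF.valid {f : PForest T g.NT} {s : PTree T g.NT} {v y : List T} (h : SubF f s v y)
    (hv : f.valid g) : s.valid g := by
  match h with
  | .headN ht => exact ht.valid hv.1
  | .consT hf => exact hf.valid hv
  | .consN hf => exact hf.valid hv.2
end

mutual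
theorem SubT.size_le {t s : PTree T N} {v y : List T} (h : SubT t s v y) :
    s.size ≤ t.size := by
  match h with
  | .refl t => exact le_rfl
  | .node A hf => exact hf.size_le.trans (Nat.le_succ _)
theorem SubF.size_le {f : PForest T N} {s : PTree T N} {v y : List T} (h : SubF f s v y) :
    s.size ≤ f.size := by
  match h with
  | .headN ht => exact ht.size_le.trans (Nat.le_add_right _ _)
  | .consT hf => exact hf.size_le
  | .consN hf => exact hf.size_le.trans (Nat.le_add_left _ _)
end

theorem SubF.size_lt {f : PForest T N} {s : PTree T N} {v y : List T} (h : SubF f s v y) :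
    s.size < (PTree.node A f).size :=
  Nat.lt_succ_of_le h.size_le

mutual
theorem SubT.trans {t s s' : PTree T N} {v y v' y' : List T}
    (h : SubT t s v y) (h' : SubT s s' v' y') : SubT t s' (v ++ v') (y' ++ y) := by
  match h with
  | .refl t => simpa using h'
  | .node A hf => exact .node A (hf.trans h')
theorem SubF.trans {f : PForest T N} {s s' : PTree T N} {v y v' y' : List T}
    (h : SubF f s v y) (h' : SubT s s' v' y') : SubF f s' (v ++ v') (y' ++ y) := by
  match h with
  | .headN ht => simpa [List.append_assoc] using SubF.headN (f := _) (ht.trans h')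
  | .consT hf => simpa using SubF.consT (hf.trans h')
  | .consN hf => simpa [List.append_assoc] using SubF.consN (hf.trans h')
end


mutual
theorem SubT.replace {t s : PTree T g.NT} {v y : List T} (h : SubT t s v y)
    (s' : PTree T g.NT) (hroot : s'.root = s.root) :
    ∃ t' : PTree T g.NT, t'.root = t.root ∧ t'.yield = v ++ s'.yield ++ y ∧
      t'.size + s.size = t.size + s'.size ∧ (t.valid g → s'.valid g → t'.valid g) := by
  match h with
  | .refl t =>
    exact ⟨s', hroot, by simp, by omega, fun _ hv => hv⟩
  | .node A hf =>
    obtain ⟨f', hs, hy, hsz, hv⟩ := hf.replace s' hroot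
    refine ⟨.node A f', rfl, by simpa [PTree.yield] using hy, ?_, ?_⟩
    · simp only [PTree.size]; omega
    · rintro ⟨⟨r, hr, hin, hout⟩, hfv⟩ hv'
      exact ⟨⟨r, hr, hin, hout.trans hs.symm⟩, hv hfv hv'⟩
theorem SubF.replace {f : PForest T g.NT} {s : PTree T g.NT} {v y : List T} (h : SubF f s v y)
    (s' : PTree T g.NT) (hroot : s'.root = s.root) :
    ∃ f' : PForest T g.NT, f'.syms = f.syms ∧ f'.yield = v ++ s'.yield ++ y ∧
      f'.size + s.size = f.size + s'.size ∧ (f.valid g → s'.valid g → f'.valid g) := by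
  match h with
  | .headN (f := f₀) ht =>
    obtain ⟨p', hs, hy, hsz, hv⟩ := ht.replace s' hroot
    refine ⟨.consN p' f₀, by simp [PForest.syms, hs], by simp [PForest.yield, hy], ?_, ?_⟩
    · simp only [PForest.size]; omega
    · exact fun hfv hv' => ⟨hv hfv.1 hv', hfv.2⟩
  | .consT (a := a) hf =>
    obtain ⟨f', hs, hy, hsz, hv⟩ := hf.replace s' hroot
    refine ⟨.consT a f', by simp [PForest.syms, hs], by simp [PForest.yield, hy], ?_, ?_⟩
    · simp only [PForest.size]; omega
    · exact fun hfv hv' => hv hfv hv'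
  | .consN (p := p) hf =>
    obtain ⟨f', hs, hy, hsz, hv⟩ := hf.replace s' hroot
    refine ⟨.consN p f', by simp [PForest.syms, hs], by simp [PForest.yield, hy], ?_, ?_⟩
    · simp only [PForest.size]; omega
    · exact fun hfv hv' => ⟨hfv.1, hv hfv.2 hv'⟩
end

theorem PTree.one_le_height (t : PTree T N) : 1 ≤ t.height := by
  match t with
  | .node A f => exact Nat.succ_le_succ (Nat.zero_le _)

theorem PForest.exists_max_child (f : PForest T N) (hf : 1 ≤ f.height) :
    ∃ (p : PTree T N) (v y : List T), SubF f p v y ∧ p.height = f.height := by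
  match f with
  | .nil => simp [PForest.height] at hf
  | .consT a f =>
    obtain ⟨p, v, y, hs, hh⟩ := f.exists_max_child hf
    exact ⟨p, a :: v, y, .consT hs, hh⟩
  | .consN p f =>
    rcases le_or_gt f.height p.height with hle | hlt
    · exact ⟨p, [], f.yield, by simpa using SubF.headN (f := f) (.refl p),
        (max_eq_left hle).symm⟩
    · obtain ⟨p', v, y, hs, hh⟩ := f.exists_max_child (p.one_le_height.trans hlt.le)
      exact ⟨p', p.yield ++ v, y, .consN hs, by rw [hh]; exact (max_eq_right hlt.le).symm⟩

section bound
variable (M : ℕ) (hM1 : 1 ≤ M) (hMr : ∀ r ∈ g.rules, r.output.length ≤ M)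
include hM1 hMr

mutual
theorem PTree.yield_len_le (t : PTree T g.NT) (hv : t.valid g) :
    t.yield.length ≤ M ^ t.height := by
  match t with
  | .node A f =>
    have hf := f.yield_len_le hv.2
    obtain ⟨r, hr, hin, hout⟩ := hv.1
    have hlen : f.syms.length ≤ M := hout ▸ hMr r hr
    calc (PTree.node A f).yield.length = f.yield.length := rfl
      _ ≤ f.syms.length * M ^ f.height := hf
      _ ≤ M * M ^ f.height := Nat.mul_le_mul_right _ hlen
      _ = M ^ (PTree.node A f).height := by rw [PTree.height, pow_succ, Nat.mul_comm]
theorem PForest.yield_len_le (f : PForest T g.NT) (hv : f.valid g) :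
    f.yield.length ≤ f.syms.length * M ^ f.height := by
  match f with
  | .nil => simp [PForest.yield]
  | .consT a f =>
    have hf := f.yield_len_le hv
    have h1 : 1 ≤ M ^ f.height := Nat.one_le_pow _ _ hM1
    simp only [PForest.yield, PForest.syms, List.length_cons, PForest.height]
    calc f.yield.length + 1 ≤ f.syms.length * M ^ f.height + M ^ f.height :=
          Nat.add_le_add hf h1
      _ = (f.syms.length + 1) * M ^ f.height := by ring
  | .consN p f =>
    have hp := p.yield_len_le hv.1
    have hf := f.yield_len_le hv.2
    simp only [PForest.yield, List.length_append, PForest.syms, List.length_cons,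
      PForest.height]
    have h1 : p.yield.length ≤ M ^ max p.height f.height :=
      hp.trans (Nat.pow_le_pow_right hM1 (le_max_left _ _))
    have h2 : f.yield.length ≤ f.syms.length * M ^ max p.height f.height :=
      hf.trans (Nat.mul_le_mul_left _ (Nat.pow_le_pow_right hM1 (le_max_right _ _)))
    calc p.yield.length + f.yield.length
        ≤ M ^ max p.height f.height + f.syms.length * M ^ max p.height f.height :=
          Nat.add_le_add h1 h2
      _ = (f.syms.length + 1) * M ^ max p.height f.height := by ring
end

end bound


theorem descend : ∀ (n : ℕ) (t : PTree T N), t.height = n → ∀ h', 1 ≤ h' → h' ≤ n →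
    ∃ (s : PTree T N) (u z : List T), SubT t s u z ∧ s.height = h' := by
  intro n
  induction n using Nat.strong_induction_on with
  | _ n ih =>
    intro t ht h' h1 h2
    rcases eq_or_lt_of_le h2 with rfl | hlt
    · exact ⟨t, [], [], .refl t, ht⟩
    · match t, ht with
      | .node A f, ht =>
        have hf : 1 ≤ f.height := by
          have := t.one_le_height
          simp only [PTree.height] at ht
          omega
        obtain ⟨p, v, y, hs, hh⟩ := f.exists_max_child hf
        simp only [PTree.height] at ht
        have hplt : p.height < n := by omega
        obtain ⟨s, u, z, hsub, hsh⟩ := ih p.height hplt p rfl h' h1 (by omega)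
        exact ⟨s, v ++ u, z ++ y, (SubT.node A hs).trans hsub, hsh⟩

noncomputable def inputs (g : ContextFreeGrammar.{0} T) : Finset g.NT :=
  letI := Classical.decEq g.NT
  g.rules.image ContextFreeRule.input

theorem root_mem_inputs {t : PTree T g.NT} (hv : t.valid g) : t.root ∈ inputs g := by
  letI := Classical.decEq g.NT
  match t with
  | .node A f =>
    obtain ⟨r, hr, hin, -⟩ := hv.1
    exact Finset.mem_image.mpr ⟨r, hr, hin⟩

theorem pigeonhole : ∀ (n : ℕ) (t : PTree T g.NT), t.height = n → t.valid g →
    ∀ seen : Finset g.NT, seen ⊆ inputs g → t.height + seen.card = (inputs g).card + 1 →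
    (∃ B ∈ seen, ∃ s v y, SubT t s v y ∧ s.root = B) ∨
    (∃ t₁ s u z v y, SubT t t₁ u z ∧ SubT t₁ s v y ∧ s.size < t₁.size ∧
      s.root = t₁.root ∧ t₁.height ≤ (inputs g).card + 1) := by
  intro n
  induction n using Nat.strong_induction_on with
  | _ n ih =>
    intro t ht hv seen hsub hcard
    match t, ht, hv with
    | .node A f, ht, hv =>
      letI := Classical.decEq g.NT
      by_cases hA : A ∈ seen
      · exact Or.inl ⟨A, hA, .node A f, [], [], .refl _, rfl⟩
      · have hAin : A ∈ inputs g := root_mem_inputs hv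
        have hseen' : insert A seen ⊆ inputs g := Finset.insert_subset hAin hsub
        have hcard' : (insert A seen).card = seen.card + 1 := Finset.card_insert_of_notMem hA
        have hcardle : (insert A seen).card ≤ (inputs g).card := Finset.card_le_card hseen'
        have hfh : 1 ≤ f.height := by
          simp only [PTree.height] at ht hcard ⊢
          omega
        obtain ⟨p, v₀, y₀, hsf, hph⟩ := f.exists_max_child hfh
        have hpv : p.valid g := hsf.valid hv.2
        have hplt : p.height < n := by simp only [PTree.height] at ht; omega
        have hpcard : p.height + (insert A seen).card = (inputs g).card + 1 := by
          simp only [PTree.height] at hcard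
          omega
        rcases ih p.height hplt p rfl hpv (insert A seen) hseen' hpcard with
          ⟨B, hB, s, v, y, hsps, hroot⟩ | ⟨t₁, s, u, z, v, y, h1, h2, h3, h4, h5⟩
        · rcases Finset.mem_insert.mp hB with heq | hBseen
          · refine Or.inr ⟨.node A f, s, [], [], v₀ ++ v, y ++ y₀, .refl _, .node A (hsf.trans hsps), ?_, ?_, ?_⟩
            · exact SubF.size_lt (hsf.trans hsps)
            · exact hroot.trans heq
            · simp only [PTree.height] at hcard ⊢; omega
          · exact Or.inl ⟨B, hBseen, s, v₀ ++ v, y ++ y₀, .node A (hsf.trans hsps), hroot⟩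
        · exact Or.inr ⟨t₁, s, v₀ ++ u, z ++ y₀, v, y, (SubT.node A hsf).trans h1, h2, h3, h4, h5⟩


def npow (n : ℕ) (l : List T) : List T := (List.replicate n l).flatten

@[simp] theorem npow_zero (l : List T) : npow 0 l = [] := rfl

theorem npow_succ (n : ℕ) (l : List T) : npow (n + 1) l = l ++ npow n l := by
  simp [npow, List.replicate_succ]

theorem npow_succ' (n : ℕ) (l : List T) : npow (n + 1) l = npow n l ++ l := by
  simp [npow, List.replicate_succ']

theorem cfg_pumping (g : ContextFreeGrammar.{0} T) :
    ∃ k : ℕ, 1 ≤ k ∧ ∀ w ∈ g.language, k < w.length →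
      ∃ u v x y z : List T, w = u ++ v ++ x ++ y ++ z ∧ 1 ≤ v.length + y.length ∧
        v.length + x.length + y.length ≤ k ∧
        ∀ n : ℕ, u ++ npow n v ++ x ++ npow n y ++ z ∈ g.language := by
  classical
  set M : ℕ := (g.rules.sup fun r => r.output.length) + 2 with hM
  have hM1 : 1 < M := by omega
  have hMr : ∀ r ∈ g.rules, r.output.length ≤ M := fun r hr =>
    (Finset.le_sup (f := fun r => r.output.length) hr).trans (by omega)
  set K : ℕ := (inputs g).card with hK
  refine ⟨M ^ (K + 1), Nat.one_le_pow _ _ (by omega), ?_⟩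
  intro w hw hlen
  -- choose a minimal-size parse tree for w
  have hex : ∃ n, ∃ t : PTree T g.NT,
      t.size = n ∧ t.valid g ∧ t.root = g.initial ∧ t.yield = w := by
    obtain ⟨t, h1, h2, h3⟩ := tree_of_mem_language hw
    exact ⟨t.size, t, rfl, h1, h2, h3⟩
  obtain ⟨t, hsz, hv, hroot, hyield⟩ := Nat.find_spec hex
  have hmin : ∀ t' : PTree T g.NT, t'.valid g → t'.root = g.initial → t'.yield = w →
      Nat.find hex ≤ t'.size := fun t' h1 h2 h3 => Nat.find_min' hex ⟨t', rfl, h1, h2, h3⟩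
  -- the tree is high
  have hwle : w.length ≤ M ^ t.height := hyield ▸ t.yield_len_le M hM1.le hMr hv
  have hht : K + 1 < t.height := by
    have : M ^ (K + 1) < M ^ t.height := lt_of_lt_of_le hlen hwle
    exact (Nat.pow_lt_pow_iff_right hM1).mp this
  -- descend to a subtree of height exactly K+1
  obtain ⟨t', U, Z, hTt', hh'⟩ := descend t.height t rfl (K + 1) (by omega) (by omega)
  have hv' : t'.valid g := hTt'.valid hv
  -- pigeonhole
  rcases pigeonhole t'.height t' rfl hv' ∅ (Finset.empty_subset _) (by simp [hh', hK]) with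
    ⟨B, hB, -⟩ | ⟨t₁, s, u, z, v, y, h1, h2, h3, h4, h5⟩
  · exact absurd hB (Finset.notMem_empty B)
  have hT1 : SubT t t₁ (U ++ u) (z ++ Z) := hTt'.trans h1
  have hv1 : t₁.valid g := hT1.valid hv
  have hvs : s.valid g := h2.valid hv1
  have hw1 : w = (U ++ u) ++ t₁.yield ++ (z ++ Z) := hyield ▸ hT1.yield_eq
  have hw2 : t₁.yield = v ++ s.yield ++ y := h2.yield_eq
  refine ⟨U ++ u, v, s.yield, y, z ++ Z, by simp [hw1, hw2], ?_, ?_, ?_⟩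
  · -- nondegeneracy via minimality
    by_contra hcon
    push_neg at hcon
    have hv0 : v = [] := List.eq_nil_of_length_eq_zero (by omega)
    have hy0 : y = [] := List.eq_nil_of_length_eq_zero (by omega)
    obtain ⟨t'', hr'', hy'', hsz'', hv''⟩ := hT1.replace s h4
    have : Nat.find hex ≤ t''.size :=
      hmin t'' (hv'' hv hvs) (hr''.trans hroot)
        (by rw [hy'', hw1, hw2, hv0, hy0]; simp)
    omega
  · have : t₁.yield.length ≤ M ^ t₁.height := t₁.yield_len_le M hM1.le hMr hv1
    have hb : M ^ t₁.height ≤ M ^ (K + 1) := Nat.pow_le_pow_right (by omega) h5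
    rw [hw2] at this
    simp only [List.length_append] at this
    omega
  · intro n
    -- build the pumped middle tree
    have hmid : ∃ τ : PTree T g.NT, τ.valid g ∧ τ.root = t₁.root ∧
        τ.yield = npow n v ++ s.yield ++ npow n y := by
      induction n with
      | zero => exact ⟨s, hvs, h4, by simp⟩
      | succ m ih =>
        obtain ⟨τ, hτv, hτr, hτy⟩ := ih
        obtain ⟨τ', hr', hy', -, hv'⟩ := h2.replace τ (hτr.trans h4.symm)
        refine ⟨τ', hv' hv1 hτv, hr', ?_⟩
        rw [hy', hτy, npow_succ m v, npow_succ' m y]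
        simp [List.append_assoc]
    obtain ⟨τ, hτv, hτr, hτy⟩ := hmid
    obtain ⟨t'', hr'', hy'', -, hv''⟩ := hT1.replace τ hτr
    have hmem := mem_language_of_tree (g := g) (hv'' hv hτv) (hr''.trans hroot)
    rw [hy'', hτy] at hmem
    simpa [List.append_assoc] using hmem


/-- Two letters occurring in a short infix of `X ++ Y ++ Z` cannot be separated by all
of `Y`. -/
theorem separation {α : Type} {X Y Z s p q : List α}
    (hw : p ++ (s ++ q) = X ++ (Y ++ Z)) (hs : s.length ≤ Y.length) {a b : α}
    (ha : a ∈ s) (hb : b ∈ s) (haY : a ∉ Y) (haZ : a ∉ Z) (hbX : b ∉ X) (hbY : b ∉ Y) :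
    False := by
  obtain ⟨i, hi, hia⟩ := List.mem_iff_getElem.mp ha
  obtain ⟨j, hj, hjb⟩ := List.mem_iff_getElem.mp hb
  have hwa : (X ++ (Y ++ Z))[p.length + i]? = some a := by
    rw [← hw, List.getElem?_append_right (by omega), Nat.add_sub_cancel_left,
      List.getElem?_append_left hi, List.getElem?_eq_getElem hi, hia]
  have hwb : (X ++ (Y ++ Z))[p.length + j]? = some b := by
    rw [← hw, List.getElem?_append_right (by omega), Nat.add_sub_cancel_left,
      List.getElem?_append_left hj, List.getElem?_eq_getElem hj, hjb]
  have hca : p.length + i < X.length := by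
    by_contra hcon
    rw [List.getElem?_append_right (by omega)] at hwa
    have := List.mem_of_getElem? hwa
    rcases List.mem_append.mp this with h | h
    · exact haY h
    · exact haZ h
  have hcb : X.length + Y.length ≤ p.length + j := by
    by_contra hcon
    push_neg at hcon
    rw [← List.append_assoc, List.getElem?_append_left
      (show p.length + j < (X ++ Y).length by rw [List.length_append]; omega)] at hwb
    rcases List.mem_append.mp (List.mem_of_getElem? hwb) with h | h
    · exact hbX h
    · exact hbY h
  omega

theorem prefix_cases {α : Type} {p A B : List α} (h : p <+: A ++ B) :
    p <+: A ∨ ∃ q, p = A ++ q ∧ q <+: B := by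
  rcases le_or_gt p.length A.length with hle | hlt
  · exact Or.inl ((List.isPrefix_append_of_length hle).mp h)
  · obtain ⟨r, hr⟩ := h
    have hA : A <+: p := by
      have h2 : A <+: p ++ r := ⟨B, hr.symm⟩
      exact (List.isPrefix_append_of_length hlt.le).mp h2
    obtain ⟨q, hq⟩ := hA
    refine Or.inr ⟨q, hq.symm, r, ?_⟩
    have : A ++ (q ++ r) = A ++ B := by rw [← List.append_assoc, hq, hr]
    exact (List.append_cancel_left this)


end BagCF

theorem bag_count_len (l : List Bag) :
    l.count .a + l.count .b + l.count .c + l.count .d = l.length := by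
  induction l with
  | nil => simp
  | cons x l ih => cases x <;> simp [List.count_cons] <;> omega

/-- The bag language is not context-free. -/
theorem bagLanguage_not_contextFree : ¬ bagLanguage.IsContextFree := by
  rintro ⟨g, hg⟩
  obtain ⟨k, hk1, hpump⟩ := BagCF.cfg_pumping g
  set Ra : List Bag := List.replicate k .a with hRa
  set Rb : List Bag := List.replicate k .b with hRb
  set Rc : List Bag := List.replicate k .c with hRc
  set Rd : List Bag := List.replicate k .d with hRd
  set w : List Bag := Ra ++ (Rc ++ (Rb ++ Rd)) with hwdef
  have hwmem : w ∈ bagLanguage := by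
    refine ⟨by simp [hwdef, hRa, hRb, hRc, hRd, List.count_append, List.count_replicate],
      by simp [hwdef, hRa, hRb, hRc, hRd, List.count_append, List.count_replicate], ?_⟩
    intro p hp
    rcases BagCF.prefix_cases hp with hp | ⟨q, rfl, hq⟩
    · constructor
      · have := hp.sublist.count_le Bag.b
        simp [hRa, List.count_replicate] at this
        omega
      · have := hp.sublist.count_le Bag.d
        simp [hRa, List.count_replicate] at this
        omega
    · rcases BagCF.prefix_cases hq with hq | ⟨q', rfl, hq'⟩
      · have hb := hq.sublist.count_le Bag.b
        have hd := hq.sublist.count_le Bag.d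
        simp [hRc, List.count_replicate] at hb hd
        simp [List.count_append, hRa, hRc, List.count_replicate]
        omega
      · rcases BagCF.prefix_cases hq' with hq' | ⟨q'', rfl, hq''⟩
        · have hb := hq'.sublist.count_le Bag.b
          have hd := hq'.sublist.count_le Bag.d
          simp [hRb, List.count_replicate] at hb hd
          simp [List.count_append, hRa, hRb, hRc, List.count_replicate]
          omega
        · have hb := hq''.sublist.count_le Bag.b
          have hd := hq''.sublist.count_le Bag.d
          simp [hRd, List.count_replicate] at hb hd
          simp [List.count_append, hRa, hRb, hRc, hRd, List.count_replicate]
          omega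
  have hwlen : k < w.length := by
    simp [hwdef, hRa, hRb, hRc, hRd]
    omega
  obtain ⟨u, v, x, y, z, hw, hne, hshort, hall⟩ :=
    hpump w (by rw [hg]; exact hwmem) hwlen
  have h2 : (u ++ BagCF.npow 2 v ++ x ++ BagCF.npow 2 y ++ z) ∈ bagLanguage := by
    rw [← hg]; exact hall 2
  have hnp2 : ∀ l : List Bag, BagCF.npow 2 l = l ++ l := by
    intro l; simp [BagCF.npow_succ, BagCF.npow]
  rw [hnp2 v, hnp2 y] at h2
  obtain ⟨hab, hcd, -⟩ := h2
  -- counts of w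
  have hcw : ∀ e : Bag, w.count e =
      u.count e + v.count e + x.count e + y.count e + z.count e := by
    intro e; rw [hw]; simp [List.count_append]; omega
  have hwa : w.count .a = k := by
    simp [hwdef, hRa, hRb, hRc, hRd, List.count_append, List.count_replicate]
  have hwb : w.count .b = k := by
    simp [hwdef, hRa, hRb, hRc, hRd, List.count_append, List.count_replicate]
  have hwc : w.count .c = k := by
    simp [hwdef, hRa, hRb, hRc, hRd, List.count_append, List.count_replicate]
  have hwd : w.count .d = k := by
    simp [hwdef, hRa, hRb, hRc, hRd, List.count_append, List.count_replicate]
  simp only [List.count_append] at hab hcd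
  have heqab : v.count Bag.a + y.count Bag.a = v.count Bag.b + y.count Bag.b := by
    have h1 := hcw .a; have h2 := hcw .b; omega
  have heqcd : v.count Bag.c + y.count Bag.c = v.count Bag.d + y.count Bag.d := by
    have h1 := hcw .c; have h2 := hcw .d; omega
  -- the middle part is short and contiguous
  have hW1 : u ++ ((v ++ x ++ y) ++ z) = Ra ++ (Rc ++ (Rb ++ Rd)) := by
    have : u ++ ((v ++ x ++ y) ++ z) = u ++ v ++ x ++ y ++ z := by
      simp [List.append_assoc]
    rw [this, ← hw]
  have hW2 : u ++ ((v ++ x ++ y) ++ z) = (Ra ++ Rc) ++ (Rb ++ Rd) := by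
    rw [hW1]; simp [List.append_assoc]
  have hslen : (v ++ x ++ y).length ≤ k := by
    simp only [List.length_append]; omega
  have hmemify : ∀ (e : Bag) (l : List Bag), 0 < l.count e → e ∈ l := by
    intro e l h; exact List.count_pos_iff.mp h
  -- no a's or b's in v ++ y
  have hnab : v.count Bag.a + y.count Bag.a = 0 := by
    by_contra hcon
    have hamem : Bag.a ∈ v ++ x ++ y := by
      rcases Nat.pos_of_ne_zero hcon |> Nat.lt_of_lt_of_le <| le_refl _ |> fun h => h with h
      have : 0 < (v ++ x ++ y).count Bag.a := by
        simp only [List.count_append]; omega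
      exact hmemify _ _ this
    have hbmem : Bag.b ∈ v ++ x ++ y := by
      have : 0 < (v ++ x ++ y).count Bag.b := by
        simp only [List.count_append]; omega
      exact hmemify _ _ this
    exact BagCF.separation hW1 (by simp [hRc]; omega) hamem hbmem
      (by simp [hRc, List.mem_replicate]) (by simp [hRb, hRd, List.mem_replicate])
      (by simp [hRa, List.mem_replicate]) (by simp [hRc, List.mem_replicate])
  have hncd : v.count Bag.c + y.count Bag.c = 0 := by
    by_contra hcon
    have hcmem : Bag.c ∈ v ++ x ++ y := by
      have : 0 < (v ++ x ++ y).count Bag.c := by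
        simp only [List.count_append]; omega
      exact hmemify _ _ this
    have hdmem : Bag.d ∈ v ++ x ++ y := by
      have : 0 < (v ++ x ++ y).count Bag.d := by
        simp only [List.count_append]; omega
      exact hmemify _ _ this
    exact BagCF.separation hW2 (by simp [hRb]; omega) hcmem hdmem
      (by simp [hRb, List.mem_replicate]) (by simp [hRd, List.mem_replicate])
      (by simp [hRa, hRc, List.mem_replicate]) (by simp [hRb, List.mem_replicate])
  have hv := bag_count_len v
  have hy := bag_count_len y
  omega
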